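/- Let α₁, β₁, γ₁, α₂, β₂, γ₂ be complex numbers and define H₀ = [[0,1,1,0],[0,1−γ₁,0,1],[0,0,1−γ₂,1],[0,0,0,2−γ₁−γ₂]] and H₁ = [[0,0,0,0],[−α₁β₁, γ₁−1−α₁−β₁, 0, 0],[−α₂β₂, 0, γ₂−1−α₂−β₂, 0],[0, −α₂β₂, −α₁β₁, γ₁+γ₂−2−α₁−α₂−β₁−β₂]]. Then for every t ∈ ℂ, det(t·I₄ + H₀ + H₁) = (t − α₁ − α₂)(t − β₁ − β₂)(t − α₁ − β₂)(t − β₁ − α₂). -/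

import Mathlib

set_option linter.unusedVariables false

noncomputable section
open Matrix

/-- The residue matrix H₀ at x = 0. -/
def H0 (α₁ β₁ γ₁ α₂ β₂ γ₂ : ℂ) : Matrix (Fin 4) (Fin 4) ℂ :=
  !![0, 1, 1, 0;
     0, 1-γ₁, 0, 1;
     0, 0, 1-γ₂, 1;
     0, 0, 0, 2-γ₁-γ₂]

/-- The residue matrix H₁ at x = 1. -/
def H1 (α₁ β₁ γ₁ α₂ β₂ γ₂ : ℂ) : Matrix (Fin 4) (Fin 4) ℂ :=
  !![0, 0, 0, 0;
     -(α₁*β₁), γ₁-1-α₁-β₁, 0, 0;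
     -(α₂*β₂), 0, γ₂-1-α₂-β₂, 0;
     0, -(α₂*β₂), -(α₁*β₁), γ₁+γ₂-2-α₁-α₂-β₁-β₂]

lemma det4 (a b c d e f g h i j k l m n o p : ℂ) :
    Matrix.det !![a,b,c,d;e,f,g,h;i,j,k,l;m,n,o,p] =
      a*(f*(k*p-l*o)-g*(j*p-l*n)+h*(j*o-k*n))
     - b*(e*(k*p-l*o)-g*(i*p-l*m)+h*(i*o-k*m))
     + c*(e*(j*p-l*n)-f*(i*p-l*m)+h*(i*n-j*m))
     - d*(e*(j*o-k*n)-f*(i*o-k*m)+g*(i*n-j*m)) := by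
  set_option maxHeartbeats 2000000 in
  simp [Matrix.det_succ_row_zero, Fin.sum_univ_succ, show ((1:Fin 4).succAbove 2) = 3 from rfl, show ((2:Fin 4).succAbove 2) = 3 from rfl, show (Fin.castSucc (2:Fin 3)) = 2 from rfl, show ((3:Fin 4).succAbove 2) = 2 from rfl]
  ring

/-- the characteristic polynomial of −(H₀+H₁) factors. -/
theorem stmt_15 (α₁ β₁ γ₁ α₂ β₂ γ₂ : ℂ) :
    ∀ t : ℂ,
      Matrix.det (t • (1 : Matrix (Fin 4) (Fin 4) ℂ)
          + H0 α₁ β₁ γ₁ α₂ β₂ γ₂ + H1 α₁ β₁ γ₁ α₂ β₂ γ₂)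
        = (t - α₁ - α₂) * (t - β₁ - β₂) * (t - α₁ - β₂) * (t - β₁ - α₂) := by
  intro t
  have h : (t • (1 : Matrix (Fin 4) (Fin 4) ℂ))
      + H0 α₁ β₁ γ₁ α₂ β₂ γ₂ + H1 α₁ β₁ γ₁ α₂ β₂ γ₂ =
      !![t, 1, 1, 0;
         -(α₁*β₁), t-α₁-β₁, 0, 1;
         -(α₂*β₂), 0, t-α₂-β₂, 1;
         0, -(α₂*β₂), -(α₁*β₁), t-α₁-α₂-β₁-β₂] := by
    ext i j
    fin_cases i <;> fin_cases j <;>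
      simp [H0, H1, Matrix.one_apply, Matrix.vecHead, Matrix.vecTail] <;> ring
  rw [h, det4]
  ring
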